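/- On the half-plane {(x, ρ) ∈ ℝ² : ρ > 0}, consider the vector fields X⁻ := (1, 0), X⁰ := (x, ρ), X⁺ := (x² − ρ², 2xρ) and the functions f⁻ := −1/ρ, f⁰ := −x/ρ, f⁺ := −(x² + ρ²)/ρ. Then each Xᵅ is Hamiltonian with Hamiltonian function fᵅ with respect to the symplectic form ω = (dx ∧ dρ)/ρ²; explicitly, for all (x, ρ) with ρ > 0 and each α ∈ {−, 0, +}: ∂fᵅ/∂x = −(Xᵅ)₂/ρ² and ∂fᵅ/∂ρ = (Xᵅ)₁/ρ², where (Xᵅ)₁, (Xᵅ)₂ are the two components of Xᵅ. -/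

import Mathlib

/-- On the half-plane `ρ > 0`, the vector fields `X⁻ = (1, 0)`, `X⁰ = (x, ρ)`,
`X⁺ = (x² − ρ², 2xρ)` are Hamiltonian with respect to the symplectic form
`ω = dx ∧ dρ / ρ²`, with Hamiltonian functions `f⁻ = −1/ρ`, `f⁰ = −x/ρ`,
`f⁺ = −(x² + ρ²)/ρ`: in components, `∂f/∂x = −X₂/ρ²` and `∂f/∂ρ = X₁/ρ²`. -/
theorem riccati_halfPlane_hamiltonian_vectorFields (x ρ : ℝ) (hρ : 0 < ρ) :
    (deriv (fun _ : ℝ => -1 / ρ) x = -(0 : ℝ) / ρ ^ 2 ∧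
      deriv (fun ρ' : ℝ => -1 / ρ') ρ = (1 : ℝ) / ρ ^ 2) ∧
    (deriv (fun x' : ℝ => -x' / ρ) x = -ρ / ρ ^ 2 ∧
      deriv (fun ρ' : ℝ => -x / ρ') ρ = x / ρ ^ 2) ∧
    (deriv (fun x' : ℝ => -(x' ^ 2 + ρ ^ 2) / ρ) x = -(2 * x * ρ) / ρ ^ 2 ∧
      deriv (fun ρ' : ℝ => -(x ^ 2 + ρ' ^ 2) / ρ') ρ = (x ^ 2 - ρ ^ 2) / ρ ^ 2) := by
  have hρ0 : ρ ≠ 0 := ne_of_gt hρ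
  refine ⟨⟨by simp, ?_⟩, ⟨?_, ?_⟩, ?_, ?_⟩
  · have : HasDerivAt (fun ρ' : ℝ => -1 / ρ') (1 / ρ ^ 2) ρ := by
      have h := (hasDerivAt_inv hρ0).neg
      have h2 : (fun ρ' : ℝ => -1 / ρ') = fun ρ' : ℝ => -ρ'⁻¹ := by
        funext y; rw [neg_div, one_div]
      rw [h2]
      refine (h).congr_deriv ?_
      rw [neg_neg, one_div]
    exact this.deriv
  · have : HasDerivAt (fun x' : ℝ => -x' / ρ) (-ρ / ρ ^ 2) x := by
      have := ((hasDerivAt_id x).neg).div_const ρ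
      refine (this).congr_deriv ?_
      field_simp
    exact this.deriv
  · have : HasDerivAt (fun ρ' : ℝ => -x / ρ') (x / ρ ^ 2) ρ := by
      have := ((hasDerivAt_id ρ).inv hρ0).const_mul (-x)
      have h2 : (fun ρ' : ℝ => -x / ρ') = fun ρ' : ℝ => -x * (id ρ')⁻¹ := by
        ext y; simp [div_eq_mul_inv]
      rw [h2]
      refine (this).congr_deriv ?_
      simp only [id]
      field_simp
    exact this.deriv
  · have : HasDerivAt (fun x' : ℝ => -(x' ^ 2 + ρ ^ 2) / ρ) (-(2 * x * ρ) / ρ ^ 2) x := by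
      have := (((hasDerivAt_id x).pow 2).add_const (ρ ^ 2)).neg.div_const ρ
      refine (this).congr_deriv ?_
      simp only [id]
      field_simp; ring
    exact this.deriv
  · have : HasDerivAt (fun ρ' : ℝ => -(x ^ 2 + ρ' ^ 2) / ρ') ((x ^ 2 - ρ ^ 2) / ρ ^ 2) ρ := by
      have h1 := (((hasDerivAt_id ρ).pow 2).const_add (x ^ 2)).neg
      have := h1.div (hasDerivAt_id ρ) hρ0
      refine (this).congr_deriv ?_
      simp only [id, Pi.neg_apply, Pi.pow_apply]
      field_simp
      ring
    exact this.deriv
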